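/- Let n ≥ 4 be an integer and let d₁, ..., d_{n-3} be positive integers. Then n(n+1)/2 - Σ_{i<j}dᵢdⱼ - (n+1)·Σⱼdⱼ + (Σⱼdⱼ)² > 0. -/
import Mathlib

open Finset

lemma aux_sq_sum {m : ℕ} (f : Fin m → ℝ) :
    (∑ j, f j) ^ 2 = ∑ j, (f j) ^ 2 +
      2 * ∑ p ∈ Finset.univ.filter (fun p : Fin m × Fin m => p.1 < p.2), f p.1 * f p.2 := by
  have h0 : (∑ j, f j) ^ 2 = ∑ p : Fin m × Fin m, f p.1 * f p.2 := by
    rw [sq, Fintype.sum_mul_sum, ← Finset.sum_product']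
    rfl
  rw [h0, ← Finset.sum_filter_add_sum_filter_not Finset.univ (fun p : Fin m × Fin m => p.1 < p.2)]
  have h1 : ∑ p ∈ Finset.univ.filter (fun p : Fin m × Fin m => ¬ p.1 < p.2), f p.1 * f p.2
      = ∑ j, (f j) ^ 2 +
        ∑ p ∈ Finset.univ.filter (fun p : Fin m × Fin m => p.1 < p.2), f p.1 * f p.2 := by
    rw [← Finset.sum_filter_add_sum_filter_not
      (Finset.univ.filter (fun p : Fin m × Fin m => ¬ p.1 < p.2))
      (fun p : Fin m × Fin m => p.1 = p.2)]
    congr 1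
    · rw [Finset.filter_filter]
      refine Finset.sum_nbij' (fun p => p.1) (fun j => (j, j)) ?_ ?_ ?_ ?_ ?_ <;>
        simp +contextual [sq]
    · rw [Finset.filter_filter]
      refine Finset.sum_nbij' (fun p => Prod.swap p) (fun p => Prod.swap p) ?_ ?_ ?_ ?_ ?_ <;>
        simp +contextual [Prod.ext_iff, mul_comm]
      · intro a b h1 h2; omega
      · intro a b h; omega
  rw [h1]; ring

theorem stmt_6 (n : ℕ) (hn : 4 ≤ n) (d : Fin (n - 3) → ℤ) (hd : ∀ j, 0 < d j) :
    (n : ℝ) * (n + 1) / 2 -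
        (∑ p ∈ Finset.univ.filter (fun p : Fin (n - 3) × Fin (n - 3) => p.1 < p.2),
          ((d p.1 : ℝ) * (d p.2 : ℝ))) -
        ((n : ℝ) + 1) * (∑ j, (d j : ℝ)) + (∑ j, (d j : ℝ)) ^ 2 > 0 := by
  set f : Fin (n - 3) → ℝ := fun j => (d j : ℝ) with hf
  set S : ℝ := ∑ j, f j with hS
  set Q : ℝ := ∑ j, (f j) ^ 2 with hQ
  set P : ℝ := ∑ p ∈ Finset.univ.filter (fun p : Fin (n - 3) × Fin (n - 3) => p.1 < p.2),
      f p.1 * f p.2 with hP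
  have hid : S ^ 2 = Q + 2 * P := aux_sq_sum f
  have hM : (Finset.univ : Finset (Fin (n - 3))).card = n - 3 := by simp
  have hC : S ^ 2 ≤ ((n - 3 : ℕ) : ℝ) * Q := by
    have := sq_sum_le_card_mul_sum_sq (s := (Finset.univ : Finset (Fin (n - 3)))) (f := f)
    simpa [hM] using this
  set M : ℝ := ((n - 3 : ℕ) : ℝ) with hMdef
  have hM1 : 1 ≤ M := by rw [hMdef]; exact_mod_cast Nat.one_le_iff_ne_zero.mpr (by omega)
  have hnM : (n : ℝ) = M + 3 := by
    rw [hMdef]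
    have h3 : (3 : ℕ) ≤ n := by omega
    push_cast [Nat.cast_sub h3]; ring
  have hPval : P = (S ^ 2 - Q) / 2 := by linarith
  rw [hnM, hPval]
  have hsq : 0 ≤ ((M + 1) * S - M * (M + 4)) ^ 2 := sq_nonneg _
  have hMM : 0 < M * (M + 1) := by nlinarith
  nlinarith [hC, hsq, hMM, hM1, mul_le_mul_of_nonneg_left hC (by linarith : (0:ℝ) ≤ M + 1)]
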